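/- With the setup of the previous statement, and additionally assuming unimodularity (any subset of the γ_i that is a basis over the field is a basis of the lattice, so cocircuits take values in {-1,0,1} on each coordinate), every λ in the dual lattice can be written as a cancellation-free sum λ = μ¹ + ... + μᵐ of cocircuits supported in Supp(λ), meaning μᵏ_i μˡ_i ≥ 0 for all indices i, k, l. -/

import Mathlib

open scoped BigOperators

/-- The support of a dual-lattice element `lam` with respect to the cocharacters `γ`. -/
def Supp {tZ : Type} [AddCommGroup tZ] {n : ℕ} (γ : Fin n → tZ)
    (lam : tZ →ₗ[ℤ] ℤ) : Set (Fin n) := {i | lam (γ i) ≠ 0}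

/-- A dual-lattice element is primitive if it is not a nontrivial integer multiple. -/
def IsPrimitiveDual {tZ : Type} [AddCommGroup tZ] (lam : tZ →ₗ[ℤ] ℤ) : Prop :=
  ∀ (c : ℤ) (μ : tZ →ₗ[ℤ] ℤ), lam = c • μ → IsUnit c

/-- A cocircuit: a nonzero primitive element of the dual lattice of minimal support. -/
def IsCocircuit {tZ : Type} [AddCommGroup tZ] {n : ℕ} (γ : Fin n → tZ)
    (lam : tZ →ₗ[ℤ] ℤ) : Prop :=
  lam ≠ 0 ∧ IsPrimitiveDual lam ∧
    ∀ μ : tZ →ₗ[ℤ] ℤ, μ ≠ 0 → Supp γ μ ⊆ Supp γ lam → Supp γ μ = Supp γ lam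

set_option linter.unusedSectionVars false
set_option maxHeartbeats 1000000
open scoped Classical

section Dev
variable {tZ : Type} [AddCommGroup tZ] [Module.Free ℤ tZ] [Module.Finite ℤ tZ]
variable {n : ℕ} (γ : Fin n → tZ)

abbrev Idx (tZ : Type) [AddCommGroup tZ] [Module.Free ℤ tZ] [Module.Finite ℤ tZ] :=
  Module.Free.ChooseBasisIndex ℤ tZ

/-- the canonical map to a rational vector space -/
noncomputable def jmap : tZ →ₗ[ℤ] (Idx tZ → ℚ) where
  toFun v := fun i => ((Module.Free.chooseBasis ℤ tZ).repr v i : ℚ)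
  map_add' v w := by funext i; simp [map_add]
  map_smul' c v := by
    funext i
    simp only [map_smul, RingHom.id_apply, Pi.smul_apply, Finsupp.smul_apply, smul_eq_mul,
      zsmul_eq_mul]
    push_cast; ring

lemma jmap_inj : Function.Injective (jmap (tZ := tZ)) := by
  intro v w h
  apply (Module.Free.chooseBasis ℤ tZ).repr.injective
  ext i
  have := congrFun h i
  simpa [jmap] using this

/-- rational vectors compatible with all integer relations among the `γ i` -/
def RealQ (f : Fin n → ℚ) : Prop :=
  ∀ c : Fin n → ℤ, (∑ i, c i • γ i = 0) → ∑ i, (c i : ℚ) * f i = 0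

/-- support of a rational vector, as a finset -/
noncomputable def QSupp (f : Fin n → ℚ) : Finset (Fin n) :=
  Finset.univ.filter (fun i => f i ≠ 0)

lemma mem_QSupp {f : Fin n → ℚ} {i : Fin n} : i ∈ QSupp f ↔ f i ≠ 0 := by
  simp [QSupp]

lemma realQ_vec (lam : tZ →ₗ[ℤ] ℤ) : RealQ γ (fun i => ((lam (γ i) : ℤ) : ℚ)) := by
  intro c hc
  have : lam (∑ i, c i • γ i) = 0 := by rw [hc]; simp
  rw [map_sum] at this
  simp only [map_smul, smul_eq_mul] at this
  have : ((∑ x : Fin n, c x * lam (γ x) : ℤ) : ℚ) = 0 := by rw [this]; simp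
  rw [← this]
  push_cast
  ring

lemma realQ_comb {g h : Fin n → ℚ} (a b : ℚ) (hg : RealQ γ g) (hh : RealQ γ h) :
    RealQ γ (fun i => a * g i + b * h i) := by
  intro c hc
  have h1 := hg c hc
  have h2 := hh c hc
  have : ∑ i, (c i : ℚ) * (a * g i + b * h i)
      = a * (∑ i, (c i : ℚ) * g i) + b * (∑ i, (c i : ℚ) * h i) := by
    rw [Finset.mul_sum, Finset.mul_sum, ← Finset.sum_add_distrib]
    apply Finset.sum_congr rfl; intros; ring
  rw [this, h1, h2]; ring

lemma realQ_ext {f g : Fin n → ℚ} (h : ∀ i, f i = g i) (hf : RealQ γ f) : RealQ γ g := by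
  have : f = g := funext h
  rwa [← this]

/-- `S` is the support of a minimal-support nonzero realizable vector -/
def IsMinS (S : Finset (Fin n)) : Prop :=
  ∀ h : Fin n → ℚ, RealQ γ h → h ≠ 0 → QSupp h ⊆ S → QSupp h = S

lemma exists_min_supp (f : Fin n → ℚ) (hf : RealQ γ f) (h0 : f ≠ 0) :
    ∃ g, RealQ γ g ∧ g ≠ 0 ∧ QSupp g ⊆ QSupp f ∧ IsMinS γ (QSupp g) := by
  set P : ℕ → Prop := fun k => ∃ h, RealQ γ h ∧ h ≠ 0 ∧ QSupp h ⊆ QSupp f ∧ (QSupp h).card = k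
    with hP
  have hPex : ∃ k, P k := ⟨(QSupp f).card, f, hf, h0, le_refl _, rfl⟩
  obtain ⟨g, hg, hg0, hgs, hgc⟩ := Nat.find_spec hPex
  refine ⟨g, hg, hg0, hgs, ?_⟩
  intro h hh hh0 hhs
  have hle : Nat.find hPex ≤ (QSupp h).card :=
    Nat.find_le ⟨h, hh, hh0, fun i hi => hgs (hhs hi), rfl⟩
  exact Finset.eq_of_subset_of_card_le hhs (by omega)

lemma minS_mult {S : Finset (Fin n)} (hmin : IsMinS γ S) {h₁ h₂ : Fin n → ℚ}
    (hr1 : RealQ γ h₁) (hr2 : RealQ γ h₂) (hs1 : QSupp h₁ ⊆ S) (hs2 : QSupp h₂ ⊆ S)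
    {j₀ : Fin n} (hj : j₀ ∈ S) : ∀ i, h₂ j₀ * h₁ i = h₁ j₀ * h₂ i := by
  set h : Fin n → ℚ := fun i => h₂ j₀ * h₁ i + (-(h₁ j₀)) * h₂ i with hdef
  have hr : RealQ γ h := realQ_comb γ _ _ hr1 hr2
  have hj0 : h j₀ = 0 := by simp [hdef]; ring
  have hsub : QSupp h ⊆ S := by
    intro i hi
    by_contra hns
    have e1 : h₁ i = 0 := by
      by_contra hc; exact hns (hs1 (mem_QSupp.2 hc))
    have e2 : h₂ i = 0 := by
      by_contra hc; exact hns (hs2 (mem_QSupp.2 hc))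
    exact (mem_QSupp.1 hi) (by simp [hdef, e1, e2])
  have hzero : h = 0 := by
    by_contra hne
    have := hmin h hr hne hsub
    have : j₀ ∈ QSupp h := this ▸ hj
    exact (mem_QSupp.1 this) hj0
  intro i
  have := congrFun hzero i
  simp only [hdef, Pi.zero_apply] at this
  linarith

lemma ne_zero_iff_exists {f : Fin n → ℚ} : f ≠ 0 ↔ ∃ i, f i ≠ 0 := by
  rw [Function.ne_iff]; rfl

lemma exists_conformal_elementary :
    ∀ (N : ℕ) (f : Fin n → ℚ), (QSupp f).card ≤ N → RealQ γ f → f ≠ 0 →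
    ∃ g, RealQ γ g ∧ g ≠ 0 ∧ QSupp g ⊆ QSupp f ∧ (∀ i, 0 ≤ g i * f i) ∧
      IsMinS γ (QSupp g) := by
  intro N
  induction N with
  | zero =>
    intro f hcard hf h0
    obtain ⟨i, hi⟩ := ne_zero_iff_exists.1 h0
    have : i ∈ QSupp f := mem_QSupp.2 hi
    have := Finset.card_pos.2 ⟨i, this⟩
    omega
  | succ N IH =>
    intro f hcard hf h0
    obtain ⟨g₀, hg₀r, hg₀0, hg₀s, hg₀min⟩ := exists_min_supp γ f hf h0
    by_cases hpos : ∀ i, 0 ≤ g₀ i * f i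
    · exact ⟨g₀, hg₀r, hg₀0, hg₀s, hpos, hg₀min⟩
    by_cases hneg : ∀ i, 0 ≤ (-(g₀ i)) * f i
    · refine ⟨fun i => -(g₀ i), ?_, ?_, ?_, hneg, ?_⟩
      · exact realQ_ext γ (f := fun i => (-1) * g₀ i + 0 * g₀ i) (by intro i; ring)
          (realQ_comb γ _ _ hg₀r hg₀r)
      · obtain ⟨i, hi⟩ := ne_zero_iff_exists.1 hg₀0
        exact ne_zero_iff_exists.2 ⟨i, by simpa using hi⟩
      · have : QSupp (fun i => -(g₀ i)) = QSupp g₀ := by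
          ext i; simp [mem_QSupp]
        rw [this]; exact hg₀s
      · have : QSupp (fun i => -(g₀ i)) = QSupp g₀ := by
          ext i; simp [mem_QSupp]
        rw [this]; exact hg₀min
    push_neg at hpos hneg
    obtain ⟨iminus, himinus⟩ := hpos
    obtain ⟨iplus, hiplus⟩ := hneg

    have hiplus' : 0 < g₀ iplus * f iplus := by nlinarith
    set A : Finset (Fin n) := (QSupp g₀).filter (fun i => 0 < g₀ i * f i) with hA
    have hiA : iplus ∈ A := by
      rw [hA, Finset.mem_filter]
      refine ⟨mem_QSupp.2 ?_, hiplus'⟩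
      intro hz; rw [hz] at hiplus'; simp at hiplus'
    obtain ⟨i₀, hi₀A, hi₀min⟩ := Finset.exists_min_image A (fun i => f i / g₀ i) ⟨iplus, hiA⟩
    have hi₀prod : 0 < g₀ i₀ * f i₀ := (Finset.mem_filter.1 hi₀A).2
    have hgi₀ : g₀ i₀ ≠ 0 := fun hz => by rw [hz] at hi₀prod; simp at hi₀prod
    have hfi₀ : f i₀ ≠ 0 := fun hz => by rw [hz] at hi₀prod; simp at hi₀prod
    set t : ℚ := f i₀ / g₀ i₀ with ht
    have htpos : 0 < t := by
      have : t = (g₀ i₀ * f i₀) / (g₀ i₀ ^ 2) := by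
        rw [ht]; field_simp
      rw [this]; exact div_pos hi₀prod (by positivity)
    set f' : Fin n → ℚ := fun i => f i - t * g₀ i with hf'
    have hreal' : RealQ γ f' :=
      realQ_ext γ (f := fun i => (-t) * g₀ i + 1 * f i) (by intro i; simp [hf']; ring)
        (realQ_comb γ _ _ hg₀r hf)
    have hsub : ∀ i, f i = 0 → f' i = 0 := by
      intro i hi
      have : g₀ i = 0 := by
        by_contra hc
        exact (mem_QSupp.1 (hg₀s (mem_QSupp.2 hc))) hi
      simp [hf', hi, this]
    have hzero : f' i₀ = 0 := by
      simp only [hf', ht]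
      field_simp
      ring
    have hconf : ∀ i, 0 ≤ f' i * f i := by
      intro i
      have hexp : f' i = f i - t * g₀ i := rfl
      rw [hexp]
      rcases le_or_gt (g₀ i * f i) 0 with hle | hlt
      · nlinarith [sq_nonneg (f i), mul_nonneg htpos.le (neg_nonneg.2 hle)]
      · have hiA' : i ∈ A := by
          rw [hA, Finset.mem_filter]
          refine ⟨mem_QSupp.2 ?_, hlt⟩
          intro hz; rw [hz] at hlt; simp at hlt
        have hgi : g₀ i ≠ 0 := fun hz => by rw [hz] at hlt; simp at hlt
        have hmin := hi₀min i hiA'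
        have key : (f i / g₀ i) * (g₀ i * f i) = f i ^ 2 := by
          field_simp
        have : t * (g₀ i * f i) ≤ (f i / g₀ i) * (g₀ i * f i) :=
          mul_le_mul_of_nonneg_right hmin (le_of_lt hlt)
        have h2 : t * (g₀ i * f i) ≤ f i ^ 2 := by linarith
        nlinarith [h2]
    have hfminus : f' iminus * f iminus > 0 := by
      have hexp : f' iminus = f iminus - t * g₀ iminus := rfl
      rw [hexp]
      nlinarith [sq_nonneg (f iminus), mul_pos htpos (neg_pos.2 himinus)]
    have hne' : f' ≠ 0 := by
      refine ne_zero_iff_exists.2 ⟨iminus, ?_⟩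
      intro hz; rw [hz] at hfminus; simp at hfminus
    have hsubset : QSupp f' ⊆ QSupp f := by
      intro i hi
      rw [mem_QSupp] at hi ⊢
      intro hz; exact hi (hsub i hz)
    have hcard' : (QSupp f').card ≤ N := by
      have hsubE : QSupp f' ⊆ (QSupp f).erase i₀ := by
        intro i hi
        rw [Finset.mem_erase]
        refine ⟨?_, hsubset hi⟩
        intro hz; rw [hz] at hi; exact (mem_QSupp.1 hi) hzero
      have h1 := Finset.card_le_card hsubE
      have h2 : i₀ ∈ QSupp f := mem_QSupp.2 hfi₀
      have h3 := Finset.card_erase_of_mem h2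
      omega
    obtain ⟨g, hgr, hg0, hgs, hgc, hgmin⟩ := IH f' hcard' hreal' hne'
    refine ⟨g, hgr, hg0, hgs.trans hsubset, ?_, hgmin⟩
    intro i
    by_cases hgi : g i = 0
    · simp [hgi]
    · have hif' : f' i ≠ 0 := mem_QSupp.1 (hgs (mem_QSupp.2 hgi))
      have hif : f i ≠ 0 := mem_QSupp.1 (hsubset (hgs (mem_QSupp.2 hgi)))
      have h1 : 0 < g i * f' i := lt_of_le_of_ne (hgc i) (by
        intro hz; exact (mul_ne_zero hgi hif') hz.symm)
      have h2 : 0 < f' i * f i := lt_of_le_of_ne (hconf i) (by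
        intro hz; exact (mul_ne_zero hif' hif) hz.symm)
      nlinarith [mul_pos h1 h2, sq_nonneg (f' i)]

noncomputable def jgam : Fin n → (Idx tZ → ℚ) := fun i => jmap (γ i)

/-- extract a finite combination from span membership over a `Finset`-image -/
lemma comb_of_mem_span {R M : Type*} [CommRing R] [AddCommGroup M] [Module R M]
    {v : Fin n → M} {T : Finset (Fin n)} {x : M}
    (h : x ∈ Submodule.span R (v '' ↑T)) :
    ∃ c : Fin n → R, (∀ i ∉ T, c i = 0) ∧ x = ∑ i, c i • v i := by
  induction h using Submodule.span_induction with
  | mem x hx =>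
    obtain ⟨i, hi, rfl⟩ := hx
    refine ⟨fun j => if j = i then 1 else 0, ?_, ?_⟩
    · intro j hj
      by_cases hji : j = i
      · exact absurd (hji ▸ hi) hj
      · simp [hji]
    · simp [ite_smul]
  | zero => exact ⟨0, by simp, by simp⟩
  | add x y hx hy ihx ihy =>
    obtain ⟨c₁, hs₁, he₁⟩ := ihx
    obtain ⟨c₂, hs₂, he₂⟩ := ihy
    refine ⟨c₁ + c₂, ?_, ?_⟩
    · intro i hi; simp [hs₁ i hi, hs₂ i hi]
    · simp only [Pi.add_apply, add_smul, Finset.sum_add_distrib, he₁, he₂]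
  | smul a x hx ihx =>
    obtain ⟨c, hs, he⟩ := ihx
    refine ⟨a • c, ?_, ?_⟩
    · intro i hi; simp [hs i hi]
    · rw [he, Finset.smul_sum]
      exact Finset.sum_congr rfl (fun i _ => by rw [Pi.smul_apply, smul_smul, smul_eq_mul])

/-- membership from a combination -/
lemma mem_span_of_comb {R M : Type*} [CommRing R] [AddCommGroup M] [Module R M]
    {v : Fin n → M} {T : Finset (Fin n)} (c : Fin n → R) (hs : ∀ i ∉ T, c i = 0) :
    ∑ i, c i • v i ∈ Submodule.span R (v '' ↑T) := by
  apply Submodule.sum_mem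
  intro i _
  by_cases hi : i ∈ T
  · exact Submodule.smul_mem _ _ (Submodule.subset_span ⟨i, by simpa using hi, rfl⟩)
  · rw [hs i hi, zero_smul]; exact Submodule.zero_mem _

/-- clear denominators in a rational combination -/
lemma clear_denoms {T : Finset (Fin n)} {y : tZ} (c : Fin n → ℚ)
    (hsupp : ∀ i ∉ T, c i = 0) (heq : jmap y = ∑ i, c i • jgam γ i) :
    ∃ (d : ℤ) (m : Fin n → ℤ), d ≠ 0 ∧ (∀ i ∉ T, m i = 0) ∧ d • y = ∑ i, m i • γ i := by
  set d : ℤ := ∏ i, ((c i).den : ℤ) with hd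
  have hdpos : 0 < d := Finset.prod_pos (fun i _ => by exact_mod_cast (c i).den_pos)
  set m : Fin n → ℤ := fun i => (c i).num * ∏ k ∈ Finset.univ.erase i, ((c k).den : ℤ) with hm
  have hmc : ∀ i, ((m i : ℤ) : ℚ) = (d : ℚ) * c i := by
    intro i
    have h1 : (d : ℚ) = ((c i).den : ℚ) * ∏ k ∈ Finset.univ.erase i, ((c k).den : ℚ) := by
      rw [hd]
      push_cast
      exact (Finset.mul_prod_erase _ _ (Finset.mem_univ i)).symm
    have h2 : ((c i).den : ℚ) * c i = (c i).num := Rat.den_mul_eq_num _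
    rw [hm]
    push_cast
    rw [h1]
    rw [mul_comm ((c i).den : ℚ), mul_assoc, h2]
    ring
  refine ⟨d, m, by omega, ?_, ?_⟩
  · intro i hi
    rw [hm]
    simp [Rat.num_eq_zero.2 (hsupp i hi)]
  · apply jmap_inj
    rw [map_smul, heq, map_sum, Finset.smul_sum]
    apply Finset.sum_congr rfl
    intro i _
    rw [map_smul]
    rw [← Int.cast_smul_eq_zsmul ℚ (d), ← Int.cast_smul_eq_zsmul ℚ (m i), smul_smul, ← hmc i]
    rfl

/-- extend a coefficient function on a subtype to `Fin n` -/
lemma sum_subtype_ext {R M : Type*} [CommRing R] [AddCommGroup M] [Module R M]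
    (T : Finset (Fin n)) (v : Fin n → M) (z : ↥(↑T : Set (Fin n)) → R) :
    ∑ i, z i • v i
      = ∑ i, (fun j => if h : j ∈ T then z ⟨j, by simpa using h⟩ else 0) i • v i := by
  set c : Fin n → R := fun j => if h : j ∈ T then z ⟨j, by simpa using h⟩ else 0 with hc
  have h1 : ∀ i : ↥(↑T : Set (Fin n)), z i • v ↑i = c ↑i • v ↑i := by
    rintro ⟨a, ha⟩
    have haT : a ∈ T := by simpa using ha
    simp only [hc, dif_pos haT]
  calc ∑ i : ↥(↑T : Set (Fin n)), z i • v ↑i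
      = ∑ i : ↥(↑T : Set (Fin n)), c ↑i • v ↑i := Finset.sum_congr rfl fun i _ => h1 i
    _ = ∑ j ∈ T, c j • v j := Finset.sum_finset_coe (fun j => c j • v j) T
    _ = ∑ j, c j • v j :=
        Finset.sum_subset (Finset.subset_univ T) (fun j _ hj => by simp [hc, dif_neg hj])

lemma cast_relation (c : Fin n → ℤ) (h : ∑ i, c i • γ i = 0) :
    ∑ i, (c i : ℚ) • jgam γ i = 0 := by
  have h2 := congrArg (jmap (tZ := tZ)) h
  rw [map_sum, map_zero] at h2
  rw [← h2]
  apply Finset.sum_congr rfl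
  intro i _
  rw [map_smul, Int.cast_smul_eq_zsmul]
  rfl

/-- independence transfer: insert a coordinate where a realizable vector is nonzero -/
lemma insert_indep (I : Finset (Fin n))
    (hIind : ∀ c : Fin n → ℚ, (∀ i ∉ I, c i = 0) → ∑ i, c i • jgam γ i = 0 → ∀ i, c i = 0)
    (g : Fin n → ℚ) (hg : RealQ γ g) (i₀ : Fin n) (hgi₀ : g i₀ ≠ 0)
    (hgI : ∀ i ∈ I, g i = 0) :
    ∀ c : Fin n → ℤ, (∀ k ∉ insert i₀ I, c k = 0) → ∑ k, c k • γ k = 0 → ∀ k, c k = 0 := by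
  intro c hcs hcz
  have h1 := hg c hcz
  have hterm : ∀ k ∈ Finset.univ, k ≠ i₀ → (c k : ℚ) * g k = 0 := by
    intro k _ hk
    by_cases hkI : k ∈ I
    · rw [hgI k hkI, mul_zero]
    · rw [hcs k (by simp [Finset.mem_insert, hk, hkI]), Int.cast_zero, zero_mul]
  have h2 : (c i₀ : ℚ) * g i₀ = 0 := by
    rw [← Finset.sum_eq_single_of_mem i₀ (Finset.mem_univ i₀) hterm]
    exact h1
  have hci₀ : c i₀ = 0 := by
    have := mul_eq_zero.1 h2
    rcases this with h | h
    · exact_mod_cast h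
    · exact absurd h hgi₀
  have hQ := hIind (fun k => (c k : ℚ)) ?_ (cast_relation γ c hcz)
  · intro k
    have := hQ k
    exact_mod_cast this
  · intro k hkI
    by_cases hk : k = i₀
    · rw [hk, hci₀, Int.cast_zero]
    · rw [hcs k (by simp [Finset.mem_insert, hk, hkI]), Int.cast_zero]

/-- transfer concrete independence to `LinearIndependent` over the subtype -/
lemma indep_subtype (T : Finset (Fin n))
    (hT : ∀ c : Fin n → ℤ, (∀ i ∉ T, c i = 0) → ∑ i, c i • γ i = 0 → ∀ i, c i = 0) :
    LinearIndependent ℤ (fun i : ↥(↑T : Set (Fin n)) => γ (i : Fin n)) := by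
  rw [Fintype.linearIndependent_iff]
  intro z hz
  have h0 : ∑ i, (fun j => if h : j ∈ T then z ⟨j, by simpa using h⟩ else 0) i • γ i = 0 :=
    (sum_subtype_ext T γ z).symm.trans hz
  have hall := hT _ (fun i hi => by simp [dif_neg hi]) h0
  rintro ⟨a, ha⟩
  have haT : a ∈ T := by simpa using ha
  have := hall a
  rwa [dif_pos haT] at this

/-- reduce the rational-spanning condition to generators -/
lemma reduce_to_gens
    (hsemigroup : ∀ v : tZ, ∃ c : Fin n → ℕ, v = ∑ j, (c j : ℤ) • γ j)
    (T : Finset (Fin n))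
    (hgen : ∀ j : Fin n, ∃ d : ℤ, d ≠ 0 ∧ d • γ j ∈ Submodule.span ℤ (γ '' ↑T)) :
    ∀ v : tZ, ∃ d : ℤ, d ≠ 0 ∧ d • v ∈ Submodule.span ℤ (γ '' ↑T) := by
  intro v
  obtain ⟨c, rfl⟩ := hsemigroup v
  choose dd hdd hmem using hgen
  refine ⟨∏ j, dd j, Finset.prod_ne_zero_iff.2 (fun j _ => hdd j), ?_⟩
  rw [Finset.smul_sum]
  apply Submodule.sum_mem
  intro j _
  have key : (∏ k, dd k) • ((c j : ℤ) • γ j)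
      = ((c j : ℤ) * ∏ k ∈ Finset.univ.erase j, dd k) • (dd j • γ j) := by
    rw [smul_smul, smul_smul, ← Finset.mul_prod_erase _ _ (Finset.mem_univ j)]
    ring_nf
  rw [key]
  exact Submodule.smul_mem _ _ (hmem j)

lemma unimod_cocircuit
    (hsemigroup : ∀ v : tZ, ∃ c : Fin n → ℕ, v = ∑ j, (c j : ℤ) • γ j)
    (hunimod : ∀ s : Set (Fin n),
      LinearIndependent ℤ (fun i : s => γ (i : Fin n)) →
      (∀ v : tZ, ∃ d : ℤ, d ≠ 0 ∧ d • v ∈ Submodule.span ℤ (γ '' s)) →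
      Submodule.span ℤ (γ '' s) = ⊤)
    (g : Fin n → ℚ) (hg : RealQ γ g) (hg0 : g ≠ 0) (hmin : IsMinS γ (QSupp g)) :
    ∃ μ : tZ →ₗ[ℤ] ℤ,
      (∀ i, i ∈ QSupp g → (μ (γ i) = 1 ∨ μ (γ i) = -1)) ∧
      (∀ i, i ∉ QSupp g → μ (γ i) = 0) ∧
      (∀ i, 0 ≤ (μ (γ i) : ℚ) * g i) := by
  obtain ⟨j₀, hgj₀⟩ := ne_zero_iff_exists.1 hg0
  have hj₀ : j₀ ∈ QSupp g := mem_QSupp.2 hgj₀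
  -- pick a maximal independent subset of the complement of the support
  have hcand : (∅ : Finset (Fin n)) ∈ (QSupp g)ᶜ.powerset.filter
      (fun T => ∀ c : Fin n → ℚ, (∀ i ∉ T, c i = 0) → ∑ i, c i • jgam γ i = 0 →
        ∀ i, c i = 0) := by
    rw [Finset.mem_filter]
    exact ⟨Finset.empty_mem_powerset _, fun c hc _ i => hc i (by simp)⟩
  obtain ⟨I, hIc, hImax⟩ := Finset.exists_max_image _ Finset.card ⟨∅, hcand⟩
  rw [Finset.mem_filter, Finset.mem_powerset] at hIc
  obtain ⟨hIZ, hIind⟩ := hIc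
  have hgI : ∀ i ∈ I, g i = 0 := by
    intro i hi
    have := hIZ hi
    rw [Finset.mem_compl, mem_QSupp, not_not] at this
    exact this
  have hj₀I : j₀ ∉ I := fun h => hgj₀ (hgI j₀ h)
  -- every coordinate outside the support is a rational combination of `I`
  have hZcomb : ∀ j ∈ (QSupp g)ᶜ, ∃ c : Fin n → ℚ, (∀ i ∉ I, c i = 0) ∧
      jgam γ j = ∑ i, c i • jgam γ i := by
    intro j hjZ
    by_cases hjI : j ∈ I
    · refine ⟨fun i => if i = j then 1 else 0, ?_, ?_⟩
      · intro i hiI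
        by_cases hij : i = j
        · exact absurd (hij ▸ hjI) hiI
        · simp [hij]
      · simp [ite_smul]
    · have hins : ¬ (∀ c : Fin n → ℚ, (∀ i ∉ insert j I, c i = 0) →
          ∑ i, c i • jgam γ i = 0 → ∀ i, c i = 0) := by
        intro hind
        have hmem : insert j I ∈ (QSupp g)ᶜ.powerset.filter
            (fun T => ∀ c : Fin n → ℚ, (∀ i ∉ T, c i = 0) → ∑ i, c i • jgam γ i = 0 →
              ∀ i, c i = 0) := by
          rw [Finset.mem_filter, Finset.mem_powerset]
          exact ⟨Finset.insert_subset hjZ hIZ, hind⟩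
        have := hImax _ hmem
        rw [Finset.card_insert_of_notMem hjI] at this
        omega
      push_neg at hins
      obtain ⟨c, hcs, hcz, i₁, hi₁⟩ := hins
      have hcj : c j ≠ 0 := by
        intro hz
        have hsub : ∀ i ∉ I, c i = 0 := by
          intro i hiI
          by_cases hij : i = j
          · rw [hij]; exact hz
          · exact hcs i (by simp [Finset.mem_insert, hij, hiI])
        exact hi₁ (hIind c hsub hcz i₁)
      refine ⟨fun i => if i = j then 0 else -c i / c j, ?_, ?_⟩
      · intro i hiI
        by_cases hij : i = j
        · simp [hij]
        · simp only [if_neg hij]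
          rw [hcs i (by simp [Finset.mem_insert, hij, hiI])]; simp
      · show jgam γ j = ∑ i, (if i = j then 0 else -c i / c j) • jgam γ i
        have hsplit : c j • jgam γ j + ∑ i ∈ Finset.univ.erase j, c i • jgam γ i = 0 :=
          (Finset.add_sum_erase _ (fun i => c i • jgam γ i) (Finset.mem_univ j)).trans hcz
        have h2 : jgam γ j = (c j)⁻¹ • (- ∑ i ∈ Finset.univ.erase j, c i • jgam γ i) := by
          have h3 := eq_neg_of_add_eq_zero_left hsplit
          rw [← h3, smul_smul, inv_mul_cancel₀ hcj, one_smul]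
        rw [h2, smul_neg, Finset.smul_sum]
        rw [← Finset.sum_subset (Finset.erase_subset j Finset.univ)
          (f := fun i => (if i = j then 0 else -c i / c j) • jgam γ i)
          (fun x _ hxe => by
            have hxj : x = j := by
              by_contra hne
              exact hxe (Finset.mem_erase.2 ⟨hne, Finset.mem_univ x⟩)
            simp [hxj])]
        rw [← Finset.sum_neg_distrib]
        apply Finset.sum_congr rfl
        intro i hi
        rw [if_neg (Finset.ne_of_mem_erase hi), smul_smul, ← neg_smul]
        congr 1
        rw [div_eq_mul_inv]; ring
  -- the distinguished subset `s₀`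
  set s₀ : Finset (Fin n) := insert j₀ I with hs₀
  have hIs₀ : ∀ i ∈ I, i ∈ s₀ := fun i hi => Finset.mem_insert_of_mem hi
  have hj₀s₀ : j₀ ∈ s₀ := Finset.mem_insert_self _ _
  have hind₀ : ∀ c : Fin n → ℤ, (∀ k ∉ s₀, c k = 0) → ∑ k, c k • γ k = 0 → ∀ k, c k = 0 :=
    insert_indep γ I hIind g hg j₀ hgj₀ hgI
  have hli₀ := indep_subtype γ s₀ hind₀
  -- rational span of `jgam` over `s₀` contains everything
  have hQspan : ∀ j : Fin n, jgam γ j ∈ Submodule.span ℚ (jgam γ '' ↑s₀) := by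
    intro j
    by_cases hjS : j ∈ QSupp g
    · by_cases hjj : j = j₀
      · exact Submodule.subset_span ⟨j₀, by simp [hs₀], hjj ▸ rfl⟩
      by_contra hnot
      rw [← Subspace.forall_mem_dualAnnihilator_apply_eq_zero_iff
        (Submodule.span ℚ (jgam γ '' ↑s₀)) (jgam γ j)] at hnot
      push_neg at hnot
      obtain ⟨φ, hφann, hφj⟩ := hnot
      rw [Submodule.mem_dualAnnihilator] at hφann
      have hhr : RealQ γ (fun i => φ (jgam γ i)) := by
        intro c hc
        have h2 := congrArg φ (cast_relation γ c hc)
        rw [map_sum, map_zero] at h2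
        rw [← h2]
        apply Finset.sum_congr rfl
        intro i _
        rw [map_smul, smul_eq_mul]
      have hh0 : (fun i => φ (jgam γ i)) ≠ 0 := ne_zero_iff_exists.2 ⟨j, hφj⟩
      have hhsupp : QSupp (fun i => φ (jgam γ i)) ⊆ QSupp g := by
        intro i hi
        by_contra hiS
        obtain ⟨c, hcs, hce⟩ := hZcomb i (Finset.mem_compl.2 hiS)
        have hmem : jgam γ i ∈ Submodule.span ℚ (jgam γ '' ↑s₀) :=
          hce ▸ mem_span_of_comb c (fun k hk => hcs k (fun hkI => hk (hIs₀ k hkI)))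
        exact (mem_QSupp.1 hi) (hφann _ hmem)
      have hhS := hmin _ hhr hh0 hhsupp
      have hj₀h : j₀ ∈ QSupp (fun i => φ (jgam γ i)) := hhS ▸ hj₀
      have hj₀mem : jgam γ j₀ ∈ Submodule.span ℚ (jgam γ '' ↑s₀) :=
        Submodule.subset_span ⟨j₀, by simp [hs₀], rfl⟩
      exact (mem_QSupp.1 hj₀h) (hφann _ hj₀mem)
    · obtain ⟨c, hcs, hce⟩ := hZcomb j (Finset.mem_compl.2 hjS)
      exact hce ▸ mem_span_of_comb c (fun k hk => hcs k (fun hkI => hk (hIs₀ k hkI)))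
  have hgen₀ : ∀ j : Fin n, ∃ d : ℤ, d ≠ 0 ∧ d • γ j ∈ Submodule.span ℤ (γ '' ↑s₀) := by
    intro j
    obtain ⟨c, hcs, hce⟩ := comb_of_mem_span (hQspan j)
    obtain ⟨d, m, hd, hms, hme⟩ := clear_denoms γ c hcs hce
    exact ⟨d, hd, hme ▸ mem_span_of_comb m hms⟩
  have htop₀ : Submodule.span ℤ (γ '' ↑s₀) = ⊤ :=
    hunimod _ hli₀ (reduce_to_gens γ hsemigroup s₀ hgen₀)
  -- the coordinate functional at `j₀` of the resulting basis
  have hsp : ⊤ ≤ Submodule.span ℤ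
      (Set.range (fun i : ↥(↑s₀ : Set (Fin n)) => γ (i : Fin n))) := by
    rw [← Set.image_eq_range, htop₀]
  set b : Module.Basis ↥(↑s₀ : Set (Fin n)) ℤ tZ := Module.Basis.mk hli₀ hsp with hb
  set μ₀ : tZ →ₗ[ℤ] ℤ := b.coord ⟨j₀, by simpa using hj₀s₀⟩ with hμ₀
  have hval : ∀ (i : Fin n) (h : i ∈ s₀), μ₀ (γ i) = if i = j₀ then 1 else 0 := by
    intro i h
    have hbi : γ i = b ⟨i, by simpa using h⟩ := by rw [hb, Module.Basis.mk_apply]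
    rw [hμ₀, hbi, Module.Basis.coord_apply, Module.Basis.repr_self, Finsupp.single_apply]
    by_cases hij : i = j₀
    · subst hij; simp
    · rw [if_neg hij, if_neg (fun hh => hij (Subtype.ext_iff.1 hh))]
  have hvj₀ : μ₀ (γ j₀) = 1 := by rw [hval j₀ hj₀s₀, if_pos rfl]
  have hvI : ∀ i ∈ I, μ₀ (γ i) = 0 := by
    intro i hi
    have hij : i ≠ j₀ := fun h => hj₀I (h ▸ hi)
    rw [hval i (hIs₀ i hi), if_neg hij]
  have hoff : ∀ i, i ∉ QSupp g → μ₀ (γ i) = 0 := by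
    intro i hiS
    obtain ⟨c, hcs, hce⟩ := hZcomb i (Finset.mem_compl.2 hiS)
    obtain ⟨d, m, hd, hms, hme⟩ := clear_denoms γ c hcs hce
    have h2 := congrArg μ₀ hme
    rw [map_smul, map_sum, smul_eq_mul] at h2
    rw [Finset.sum_eq_zero (fun k _ => by
      by_cases hkI : k ∈ I
      · rw [map_smul, hvI k hkI, smul_zero]
      · rw [hms k hkI, zero_smul, map_zero])] at h2
    exact (mul_eq_zero.1 h2).resolve_left hd
  have haR : RealQ γ (fun i => ((μ₀ (γ i) : ℤ) : ℚ)) := realQ_vec γ μ₀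
  have hasupp : QSupp (fun i => ((μ₀ (γ i) : ℤ) : ℚ)) ⊆ QSupp g := by
    intro i hi
    by_contra hiS
    exact (mem_QSupp.1 hi) (by rw [hoff i hiS, Int.cast_zero])
  have hane : (fun i => ((μ₀ (γ i) : ℤ) : ℚ)) ≠ 0 :=
    ne_zero_iff_exists.2 ⟨j₀, by rw [hvj₀]; norm_num⟩
  have haS := hmin _ haR hane hasupp
  have haMem : ∀ i ∈ QSupp g, μ₀ (γ i) ≠ 0 := by
    intro i hi hz
    have hmem : i ∈ QSupp (fun i => ((μ₀ (γ i) : ℤ) : ℚ)) := haS ▸ hi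
    exact (mem_QSupp.1 hmem) (by rw [hz]; simp)
  -- proportionality
  have hid : ∀ i, g i = g j₀ * ((μ₀ (γ i) : ℤ) : ℚ) := by
    intro i
    have h2 := minS_mult γ hmin hg haR (le_refl _) hasupp hj₀ i
    simp only [hvj₀, Int.cast_one, one_mul] at h2
    exact h2
  -- the values on the support are units
  have hpm : ∀ i ∈ QSupp g, μ₀ (γ i) = 1 ∨ μ₀ (γ i) = -1 := by
    intro i hiS
    by_cases hij : i = j₀
    · left; rw [hij, hvj₀]
    have hai : μ₀ (γ i) ≠ 0 := haMem i hiS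
    have hiI : i ∉ I := fun h => (mem_QSupp.1 hiS) (hgI i h)
    set s₁ : Finset (Fin n) := insert i I with hs₁
    have hind₁ : ∀ c : Fin n → ℤ, (∀ k ∉ s₁, c k = 0) → ∑ k, c k • γ k = 0 → ∀ k, c k = 0 :=
      insert_indep γ I hIind (fun k => ((μ₀ (γ k) : ℤ) : ℚ)) haR i
        (by exact_mod_cast hai)
        (fun k hk => by show ((μ₀ (γ k) : ℤ) : ℚ) = 0; rw [hvI k hk, Int.cast_zero])
    have hli₁ := indep_subtype γ s₁ hind₁
    have hkey : μ₀ (γ i) • γ j₀ ∈ Submodule.span ℤ (γ '' ↑s₁) := by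
      have hvmem : μ₀ (γ i) • γ j₀ - γ i ∈ Submodule.span ℤ (γ '' ↑s₀) := by
        rw [htop₀]; trivial
      obtain ⟨m, hms, hme⟩ := comb_of_mem_span hvmem
      have hmj₀ : m j₀ = 0 := by
        have h2 := congrArg μ₀ hme
        rw [map_sub, map_smul, map_sum, smul_eq_mul, hvj₀, mul_one, sub_self] at h2
        rw [Finset.sum_eq_single_of_mem j₀ (Finset.mem_univ j₀) (fun k _ hk => by
          by_cases hkI : k ∈ I
          · rw [map_smul, hvI k hkI, smul_zero]
          · rw [hms k (by simp [hs₀, Finset.mem_insert, hk, hkI]), zero_smul, map_zero])] at h2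
        rw [map_smul, hvj₀, smul_eq_mul, mul_one] at h2
        exact h2.symm
      have hrw : μ₀ (γ i) • γ j₀ = γ i + ∑ k, m k • γ k := by
        rw [← hme]; abel
      rw [hrw]
      apply Submodule.add_mem
      · exact Submodule.subset_span ⟨i, by simp [hs₁], rfl⟩
      · apply mem_span_of_comb m
        intro k hk
        by_cases hkj₀ : k = j₀
        · rw [hkj₀]; exact hmj₀
        · apply hms
          intro hks₀
          rcases Finset.mem_insert.1 hks₀ with h | h
          · exact hkj₀ h
          · exact hk (by simp [hs₁, Finset.mem_insert, h])
    have hspan₁ : ∀ v : tZ, ∃ d : ℤ, d ≠ 0 ∧ d • v ∈ Submodule.span ℤ (γ '' ↑s₁) := by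
      intro v
      refine ⟨μ₀ (γ i), hai, ?_⟩
      have hvmem : v ∈ Submodule.span ℤ (γ '' ↑s₀) := by rw [htop₀]; trivial
      obtain ⟨m, hms, hme⟩ := comb_of_mem_span hvmem
      rw [hme, Finset.smul_sum]
      apply Submodule.sum_mem
      intro k _
      by_cases hkj₀ : k = j₀
      · rw [hkj₀, smul_comm]
        exact Submodule.smul_mem _ _ hkey
      · by_cases hkI : k ∈ I
        · exact Submodule.smul_mem _ _ (Submodule.smul_mem _ _
            (Submodule.subset_span ⟨k, by simp [hs₁, Finset.mem_insert, hkI], rfl⟩))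
        · rw [hms k (by simp [hs₀, Finset.mem_insert, hkj₀, hkI]), zero_smul, smul_zero]
          exact Submodule.zero_mem _
    have htop₁ := hunimod _ hli₁ hspan₁
    have hj₀mem : γ j₀ ∈ Submodule.span ℤ (γ '' ↑s₁) := by rw [htop₁]; trivial
    obtain ⟨m, hms, hme⟩ := comb_of_mem_span hj₀mem
    have h2 := congrArg μ₀ hme
    rw [map_sum, hvj₀] at h2
    rw [Finset.sum_eq_single_of_mem i (Finset.mem_univ i) (fun k _ hk => by
      by_cases hkI : k ∈ I
      · rw [map_smul, hvI k hkI, smul_zero]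
      · rw [hms k (by simp [hs₁, Finset.mem_insert, hk, hkI]), zero_smul, map_zero])] at h2
    rw [map_smul, smul_eq_mul] at h2
    have hu : IsUnit (μ₀ (γ i)) := IsUnit.of_mul_eq_one (m i) (by linarith [h2])
    exact Int.isUnit_iff.1 hu
  -- sign adjustment
  rcases hgj₀.lt_or_gt with hneg | hpos
  · refine ⟨-μ₀, ?_, ?_, ?_⟩
    · intro i hi
      rcases hpm i hi with h | h
      · right; simp [h]
      · left; simp [h]
    · intro i hi; simp [hoff i hi]
    · intro i
      simp only [LinearMap.neg_apply, Int.cast_neg]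
      rw [hid i]
      nlinarith [sq_nonneg ((μ₀ (γ i) : ℤ) : ℚ)]
  · refine ⟨μ₀, hpm, hoff, ?_⟩
    intro i
    rw [hid i]
    nlinarith [sq_nonneg ((μ₀ (γ i) : ℤ) : ℚ)]

lemma lam_zero (hsemigroup : ∀ v : tZ, ∃ c : Fin n → ℕ, v = ∑ j, (c j : ℤ) • γ j)
    (lam : tZ →ₗ[ℤ] ℤ) (h : ∀ i, lam (γ i) = 0) : lam = 0 := by
  apply LinearMap.ext
  intro v
  obtain ⟨c, rfl⟩ := hsemigroup v
  rw [map_sum]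
  simp [map_smul, h]

lemma lam_ne (hsemigroup : ∀ v : tZ, ∃ c : Fin n → ℕ, v = ∑ j, (c j : ℤ) • γ j)
    (lam : tZ →ₗ[ℤ] ℤ) (h : lam ≠ 0) : ∃ i, lam (γ i) ≠ 0 := by
  by_contra hc
  push_neg at hc
  exact h (lam_zero γ hsemigroup lam hc)

lemma supp_coe (ψ : tZ →ₗ[ℤ] ℤ) :
    Supp γ ψ = ↑(QSupp (fun i => ((ψ (γ i) : ℤ) : ℚ))) := by
  ext i
  simp [Supp, mem_QSupp]

lemma main_decomp
    (hsemigroup : ∀ v : tZ, ∃ c : Fin n → ℕ, v = ∑ j, (c j : ℤ) • γ j)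
    (hunimod : ∀ s : Set (Fin n),
      LinearIndependent ℤ (fun i : s => γ (i : Fin n)) →
      (∀ v : tZ, ∃ d : ℤ, d ≠ 0 ∧ d • v ∈ Submodule.span ℤ (γ '' s)) →
      Submodule.span ℤ (γ '' s) = ⊤) :
    ∀ (N : ℕ) (lam : tZ →ₗ[ℤ] ℤ), (∑ i, (lam (γ i)).natAbs) ≤ N →
    ∃ (m : ℕ) (μ : Fin m → (tZ →ₗ[ℤ] ℤ)),
      (∀ k, IsCocircuit γ (μ k) ∧ (∀ i, (μ k) (γ i) ≠ 0 → lam (γ i) ≠ 0) ∧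
        (∀ i, 0 ≤ (μ k) (γ i) * lam (γ i))) ∧ lam = ∑ k, μ k := by
  intro N
  induction N with
  | zero =>
    intro lam hle
    have h0 : ∀ i, lam (γ i) = 0 := by
      intro i
      have h2 := Finset.single_le_sum (f := fun i => (lam (γ i)).natAbs)
        (fun i _ => Nat.zero_le _) (Finset.mem_univ i)
      omega
    exact ⟨0, Fin.elim0, fun k => k.elim0, by
      rw [lam_zero γ hsemigroup lam h0]; simp⟩
  | succ N IH =>
    intro lam hle
    by_cases h0 : ∀ i, lam (γ i) = 0
    · exact ⟨0, Fin.elim0, fun k => k.elim0, by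
        rw [lam_zero γ hsemigroup lam h0]; simp⟩
    push_neg at h0
    obtain ⟨i₁, hi₁⟩ := h0
    set f : Fin n → ℚ := fun i => ((lam (γ i) : ℤ) : ℚ) with hf
    have hfr : RealQ γ f := realQ_vec γ lam
    have hf0 : f ≠ 0 := ne_zero_iff_exists.2 ⟨i₁, by simp [hf, hi₁]⟩
    obtain ⟨g, hgr, hg0, hgs, hgc, hgmin⟩ :=
      exists_conformal_elementary γ (QSupp f).card f (le_refl _) hfr hf0
    obtain ⟨μ, hμ1, hμ0, hμsign⟩ := unimod_cocircuit γ hsemigroup hunimod g hgr hg0 hgmin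
    have hμsupp : ∀ i, μ (γ i) ≠ 0 ↔ i ∈ QSupp g := by
      intro i
      constructor
      · intro h
        by_contra hn
        exact h (hμ0 i hn)
      · intro h
        rcases hμ1 i h with h' | h' <;> simp [h']
    have hlamne : ∀ i, i ∈ QSupp g → lam (γ i) ≠ 0 := by
      intro i hiS hz
      exact (mem_QSupp.1 (hgs hiS)) (by simp [hf, hz])
    have hconf : ∀ i, 0 ≤ μ (γ i) * lam (γ i) := by
      intro i
      by_cases hz : μ (γ i) = 0
      · simp [hz]
      have hiS : i ∈ QSupp g := (hμsupp i).1 hz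
      have hgi : g i ≠ 0 := mem_QSupp.1 hiS
      have hfi : f i ≠ 0 := mem_QSupp.1 (hgs hiS)
      have h1 : 0 < (μ (γ i) : ℚ) * g i := lt_of_le_of_ne (hμsign i)
        (fun h => (mul_ne_zero (Int.cast_ne_zero.2 hz) hgi) h.symm)
      have h2 : 0 < g i * f i := lt_of_le_of_ne (hgc i)
        (fun h => (mul_ne_zero hgi hfi) h.symm)
      have h3 : 0 < (μ (γ i) : ℚ) * f i := by
        nlinarith [mul_pos h1 h2, sq_nonneg (g i)]
      have h4 : (0 : ℚ) < ((μ (γ i) * lam (γ i) : ℤ) : ℚ) := by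
        push_cast
        exact h3
      exact_mod_cast h4.le
    obtain ⟨j₀, hgj₀⟩ := ne_zero_iff_exists.1 hg0
    have hj₀S : j₀ ∈ QSupp g := mem_QSupp.2 hgj₀
    have hμj₀ : μ (γ j₀) ≠ 0 := (hμsupp j₀).2 hj₀S
    have hμne : μ ≠ 0 := fun h => hμj₀ (by rw [h]; rfl)
    have hprimμ : IsPrimitiveDual μ := by
      intro c ν hcv
      have hval : μ (γ j₀) = c * ν (γ j₀) := by rw [hcv]; simp
      rcases hμ1 j₀ hj₀S with h | h
      · rw [h] at hval
        exact IsUnit.of_mul_eq_one (a := c) (ν (γ j₀)) hval.symm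
      · rw [h] at hval
        refine IsUnit.of_mul_eq_one (a := c) (-(ν (γ j₀))) ?_
        rw [mul_neg, ← hval]
        norm_num
    have hQSμ : QSupp (fun i => ((μ (γ i) : ℤ) : ℚ)) = QSupp g := by
      ext i
      rw [mem_QSupp, ← hμsupp i]
      simp
    have hcocirc : IsCocircuit γ μ := by
      refine ⟨hμne, hprimμ, ?_⟩
      intro ν hν hsub
      rw [supp_coe γ ν, supp_coe γ μ] at hsub ⊢
      rw [Finset.coe_subset] at hsub
      rw [Finset.coe_inj]
      have hνr : RealQ γ (fun i => ((ν (γ i) : ℤ) : ℚ)) := realQ_vec γ ν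
      have hνne : (fun i => ((ν (γ i) : ℤ) : ℚ)) ≠ 0 := by
        obtain ⟨i, hi⟩ := lam_ne γ hsemigroup ν hν
        exact ne_zero_iff_exists.2 ⟨i, by simpa using hi⟩
      have hres := hgmin _ hνr hνne (by rw [← hQSμ]; exact hsub)
      rw [hres, hQSμ]
    set lam' : tZ →ₗ[ℤ] ℤ := lam - μ with hlam'
    have hval' : ∀ i, lam' (γ i) = lam (γ i) - μ (γ i) := by
      intro i
      simp [hlam']
    have hdec : ∀ i, (lam' (γ i)).natAbs ≤ (lam (γ i)).natAbs ∧
        (μ (γ i) ≠ 0 → (lam' (γ i)).natAbs < (lam (γ i)).natAbs) := by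
      intro i
      by_cases hz : μ (γ i) = 0
      · rw [hval' i, hz]
        exact ⟨by simp, fun h => absurd rfl h⟩
      have hiS : i ∈ QSupp g := (hμsupp i).1 hz
      have hcpos : 0 < μ (γ i) * lam (γ i) :=
        lt_of_le_of_ne (hconf i) (fun h => (mul_ne_zero hz (hlamne i hiS)) h.symm)
      rcases hμ1 i hiS with h1 | h1
      · have hpos : 0 < lam (γ i) := by
          rw [h1, one_mul] at hcpos
          exact hcpos
        rw [hval' i, h1]
        exact ⟨by omega, fun _ => by omega⟩
      · have hneg : lam (γ i) < 0 := by
          rw [h1] at hcpos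
          nlinarith
        rw [hval' i, h1]
        exact ⟨by omega, fun _ => by omega⟩
    have hlt : ∑ i, (lam' (γ i)).natAbs < ∑ i, (lam (γ i)).natAbs :=
      Finset.sum_lt_sum (fun i _ => (hdec i).1)
        ⟨j₀, Finset.mem_univ j₀, (hdec j₀).2 hμj₀⟩
    obtain ⟨m, ν, hν, hsum⟩ := IH lam' (by omega)
    have hsupp' : ∀ i, lam' (γ i) ≠ 0 → lam (γ i) ≠ 0 := by
      intro i h4 hlam0
      apply h4
      have hμz : μ (γ i) = 0 := by
        by_contra hμz
        exact hlamne i ((hμsupp i).1 hμz) hlam0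
      rw [hval' i, hlam0, hμz, sub_zero]
    have hsign' : ∀ i, 0 ≤ lam' (γ i) * lam (γ i) := by
      intro i
      by_cases hμz : μ (γ i) = 0
      · rw [hval' i, hμz, sub_zero]
        exact mul_self_nonneg _
      have hiS : i ∈ QSupp g := (hμsupp i).1 hμz
      have hcpos : 0 < μ (γ i) * lam (γ i) :=
        lt_of_le_of_ne (hconf i) (fun h => (mul_ne_zero hμz (hlamne i hiS)) h.symm)
      rcases hμ1 i hiS with h1 | h1
      · have hpos : 0 < lam (γ i) := by
          rw [h1, one_mul] at hcpos
          exact hcpos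
        rw [hval' i, h1]
        nlinarith
      · have hneg : lam (γ i) < 0 := by
          rw [h1] at hcpos
          nlinarith
        rw [hval' i, h1]
        nlinarith
    refine ⟨m + 1, Fin.cons μ ν, ?_, ?_⟩
    · intro k
      refine Fin.cases ?_ ?_ k
      · refine ⟨by simpa using hcocirc, ?_, ?_⟩
        · intro i hi
          simp only [Fin.cons_zero] at hi
          exact hlamne i ((hμsupp i).1 hi)
        · intro i
          simpa using hconf i
      · intro k'
        obtain ⟨hc1, hc2, hc3⟩ := hν k'
        refine ⟨by simpa using hc1, ?_, ?_⟩
        · intro i hi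
          simp only [Fin.cons_succ] at hi
          exact hsupp' i (hc2 i hi)
        · intro i
          simp only [Fin.cons_succ]
          by_cases hz : ν k' (γ i) = 0
          · simp [hz]
          have h4 : lam' (γ i) ≠ 0 := hc2 i hz
          have h5 : 0 < ν k' (γ i) * lam' (γ i) :=
            lt_of_le_of_ne (hc3 i) (fun h => (mul_ne_zero hz h4) h.symm)
          have h7 : 0 < lam' (γ i) * lam (γ i) :=
            lt_of_le_of_ne (hsign' i) (fun h => (mul_ne_zero h4 (hsupp' i h4)) h.symm)
          nlinarith [mul_pos h5 h7, sq_nonneg (lam' (γ i))]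
    · rw [Fin.sum_cons, ← hsum, hlam']
      abel

end Dev

/-- Assuming unimodularity (any subset of the `γ i` that is a basis over the field is a
basis of the lattice), every `lam` in the dual lattice is a cancellation-free sum of
cocircuits supported in `Supp lam`. -/
theorem stmt1 (tZ : Type) [AddCommGroup tZ] [Module.Free ℤ tZ] [Module.Finite ℤ tZ]
    (n : ℕ) (γ : Fin n → tZ)
    (hne : ∀ i, γ i ≠ 0)
    (hprim : ∀ i, ∀ (c : ℤ) (w : tZ), γ i = c • w → IsUnit c)
    (hspanother : ∀ i, ∃ (d : ℤ) (c : Fin n → ℤ), d ≠ 0 ∧ c i = 0 ∧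
      d • γ i = ∑ j, c j • γ j)
    (hsemigroup : ∀ v : tZ, ∃ c : Fin n → ℕ, v = ∑ j, (c j : ℤ) • γ j)
    -- unimodularity: a subset of the `γ i` that is linearly independent and spans
    -- rationally (i.e. is a basis over the field) spans the lattice over ℤ
    (hunimod : ∀ s : Set (Fin n),
      LinearIndependent ℤ (fun i : s => γ (i : Fin n)) →
      (∀ v : tZ, ∃ d : ℤ, d ≠ 0 ∧ d • v ∈ Submodule.span ℤ (γ '' s)) →
      Submodule.span ℤ (γ '' s) = ⊤)
    (lam : tZ →ₗ[ℤ] ℤ) :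
    ∃ (m : ℕ) (μ : Fin m → (tZ →ₗ[ℤ] ℤ)),
      (∀ k, IsCocircuit γ (μ k) ∧ Supp γ (μ k) ⊆ Supp γ lam) ∧
      lam = ∑ k, μ k ∧
      -- cancellation-free: coordinates of the summands never have opposite signs
      ∀ (i : Fin n) (k l : Fin m), 0 ≤ (μ k) (γ i) * (μ l) (γ i) := by
  obtain ⟨m, μ, hprops, hsum⟩ :=
    main_decomp γ hsemigroup hunimod (∑ i, (lam (γ i)).natAbs) lam (le_refl _)
  refine ⟨m, μ, ?_, hsum, ?_⟩
  · intro k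
    obtain ⟨h1, h2, h3⟩ := hprops k
    exact ⟨h1, fun i hi => h2 i hi⟩
  · intro i k l
    by_cases hk : μ k (γ i) = 0
    · simp [hk]
    by_cases hl : μ l (γ i) = 0
    · simp [hl]
    obtain ⟨-, hk2, hk3⟩ := hprops k
    obtain ⟨-, -, hl3⟩ := hprops l
    have hlam : lam (γ i) ≠ 0 := hk2 i hk
    have p1 : 0 < μ k (γ i) * lam (γ i) :=
      lt_of_le_of_ne (hk3 i) (fun h => (mul_ne_zero hk hlam) h.symm)
    have p2 : 0 < μ l (γ i) * lam (γ i) :=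
      lt_of_le_of_ne (hl3 i) (fun h => (mul_ne_zero hl hlam) h.symm)
    nlinarith [mul_pos p1 p2, sq_nonneg (lam (γ i))]
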